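/- For the G-polynomial G_p^{m,n,k}(x,y) := (1/k!) d^k/dt^k|_{t=0} ∫_0^{x+ty} s^m(1+tp+s)^n ds, with x > 0 and k ≥ 1, one has ∂G_p^{m,n,k}/∂y (x,y) = x^m (1+x)^n · σ_{k-1}(λ̌), where λ̌ ∈ ℝ^{m+n} has m components equal to y/x and n components equal to (p+y)/(1+x). -/

import Mathlib

open Polynomial
lemma coeff_binom (u v : ℝ) (M b : ℕ) :
    ((C u + C v * X)^M).coeff b = (M.choose b : ℝ) * u^(M-b) * v^b := by
  rw [add_comm (C u), add_pow, finset_sum_coeff]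
  rw [Finset.sum_eq_single b]
  · rw [mul_pow, ← C_pow, ← C_pow, ← C_eq_natCast, mul_right_comm, mul_assoc,
      ← C_mul, coeff_mul_C, coeff_C_mul, coeff_X_pow, if_pos rfl]
    ring
  · intro i _ hib
    rw [mul_pow, ← C_pow, ← C_pow, ← C_eq_natCast, mul_right_comm, mul_assoc,
      ← C_mul, coeff_mul_C, coeff_C_mul, coeff_X_pow, if_neg fun h => hib h.symm]
    ring
  · intro hb
    simp only [Finset.mem_range, not_lt] at hb
    rw [Nat.choose_eq_zero_of_lt (by omega)]
    simp

/-- The k-th elementary symmetric function on ℝ^n. -/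
noncomputable def esymm (n k : ℕ) (l : Fin n → ℝ) : ℝ :=
  ∑ s ∈ Finset.powersetCard k (Finset.univ : Finset (Fin n)), ∏ i ∈ s, l i

lemma coeff_prod_one_add (N K : ℕ) (l : Fin N → ℝ) :
    (∏ i : Fin N, (1 + C (l i) * X)).coeff K = esymm N K l := by
  have : ∀ i : Fin N, (1 : ℝ[X]) + C (l i) * X = C (l i) * X + 1 := fun i => add_comm _ _
  simp_rw [this, Finset.prod_add, Finset.prod_const_one, mul_one]
  rw [finset_sum_coeff]
  have h2 : ∀ t : Finset (Fin N),
      (∏ i ∈ t, (C (l i) * X)).coeff K = if t.card = K then ∏ i ∈ t, l i else 0 := by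
    intro t
    rw [Finset.prod_mul_distrib, Finset.prod_const, ← map_prod, coeff_C_mul, coeff_X_pow]
    split_ifs with h1 h2 h2 <;> simp_all [eq_comm]
  simp_rw [h2]
  rw [esymm, Finset.powersetCard_eq_filter, Finset.sum_filter]

lemma iteratedDeriv_polyEval (R : ℝ[X]) (k : ℕ) :
    iteratedDeriv k (fun t => R.eval t) 0 = (k.factorial : ℝ) * R.coeff k := by
  have h : ∀ (j : ℕ) (R : ℝ[X]), iteratedDeriv j (fun t => R.eval t) =
      fun t => (derivative^[j] R).eval t := by
    intro j
    induction j with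
    | zero => simp [iteratedDeriv_zero]
    | succ j ih =>
      intro R
      rw [iteratedDeriv_succ, ih R]
      funext t
      rw [Function.iterate_succ_apply', Polynomial.deriv]
  rw [h]
  show ((⇑derivative)^[k] R).eval 0 = _
  rw [← coeff_zero_eq_eval_zero, Polynomial.coeff_iterate_derivative, zero_add,
    Nat.descFactorial_self, nsmul_eq_mul]

lemma integral_closed (m n : ℕ) (p x y t : ℝ) :
    (∫ s in (0:ℝ)..(x + t * y), s ^ m * (1 + t * p + s) ^ n)
      = ∑ j ∈ Finset.range (n+1), (n.choose j : ℝ) * (1 + t * p)^(n-j)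
          * (x + t * y)^(m+j+1) / (m+j+1) := by
  have hint : ∀ s : ℝ, s ^ m * (1 + t * p + s) ^ n
      = ∑ j ∈ Finset.range (n+1), (n.choose j : ℝ) * (1 + t * p)^(n-j) * s^(m+j) := by
    intro s
    rw [add_comm (1 + t*p) s, add_pow, Finset.mul_sum]
    refine Finset.sum_congr rfl fun j _ => by rw [pow_add]; ring
  simp_rw [hint]
  rw [intervalIntegral.integral_finset_sum]
  · refine Finset.sum_congr rfl fun j _ => ?_
    rw [intervalIntegral.integral_const_mul, integral_pow]
    rw [zero_pow (by omega)]
    push_cast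
    ring
  · intro j _
    exact (Continuous.intervalIntegrable (by continuity) _ _)

/-- The Fang–Lai polynomial G_p^{m,n,k}(x,y). -/
noncomputable def G (m n k : ℕ) (p x y : ℝ) : ℝ :=
  iteratedDeriv k (fun t => ∫ s in (0:ℝ)..(x + t * y), s ^ m * (1 + t * p + s) ^ n) 0
    / (Nat.factorial k : ℝ)

lemma G_closed (m n k : ℕ) (p x y : ℝ) :
    G m n k p x y = ∑ j ∈ Finset.range (n+1), (n.choose j : ℝ)/(m+j+1)
      * ((1 + C p * X)^(n-j) * (C x + C y * X)^(m+j+1)).coeff k := by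
  set R : ℝ[X] := ∑ j ∈ Finset.range (n+1), Polynomial.C ((n.choose j : ℝ)/(m+j+1))
      * ((1 + C p * X)^(n-j) * (C x + C y * X)^(m+j+1)) with hR
  have hfun : (fun t => ∫ s in (0:ℝ)..(x + t * y), s ^ m * (1 + t * p + s) ^ n)
      = fun t => R.eval t := by
    funext t
    rw [integral_closed, hR]
    rw [eval_finset_sum]
    refine Finset.sum_congr rfl fun j _ => ?_
    simp only [eval_mul, eval_pow, eval_add, eval_one, eval_C, eval_X]
    ring
  rw [G, hfun, iteratedDeriv_polyEval, hR, finset_sum_coeff]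
  rw [mul_comm, mul_div_assoc, div_self (by positivity), mul_one]
  refine Finset.sum_congr rfl fun j _ => ?_
  rw [coeff_C_mul]

lemma hasDerivAt_coeff (A : ℝ[X]) (x y : ℝ) (M k : ℕ) (hM : 1 ≤ M) (hk : 1 ≤ k) :
    HasDerivAt (fun y => (A * (C x + C y * X)^M).coeff k)
      ((M:ℝ) * (A * (C x + C y * X)^(M-1)).coeff (k-1)) y := by
  obtain ⟨k', rfl⟩ : ∃ k', k = k' + 1 := ⟨k-1, by omega⟩
  have key : ∀ (N K : ℕ) (z : ℝ), (A * (C x + C z * X)^N).coeff K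
      = ∑ ab ∈ Finset.HasAntidiagonal.antidiagonal K,
          (A.coeff ab.1 * ((N.choose ab.2 : ℝ) * x^(N-ab.2))) * z^ab.2 := by
    intro N K z
    rw [Polynomial.coeff_mul]
    exact Finset.sum_congr rfl fun ab _ => by rw [coeff_binom]; ring
  simp_rw [key]
  have hd : HasDerivAt
      (fun z : ℝ => ∑ ab ∈ Finset.HasAntidiagonal.antidiagonal (k'+1),
          (A.coeff ab.1 * (((M.choose ab.2 : ℝ)) * x^(M-ab.2))) * z^ab.2)
      (∑ ab ∈ Finset.HasAntidiagonal.antidiagonal (k'+1),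
          (A.coeff ab.1 * (((M.choose ab.2 : ℝ)) * x^(M-ab.2))) * ((ab.2 : ℝ) * y^(ab.2-1)))
      y := HasDerivAt.fun_sum fun ab _ => (hasDerivAt_pow ab.2 y).const_mul _
  convert hd using 1
  rw [Finset.mul_sum, Finset.Nat.antidiagonal_succ', Finset.sum_cons, Finset.sum_map]
  simp only [Nat.cast_zero, zero_mul, mul_zero, pow_zero, Nat.add_sub_cancel]
  rw [zero_add]
  refine Finset.sum_congr rfl fun ab _ => ?_
  simp only [Function.Embedding.coe_prodMap, Function.Embedding.refl_apply, Prod.map_fst,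
    Prod.map_snd, Function.Embedding.coeFn_mk]
  have hM1 : M - 1 + 1 = M := by omega
  have hn : M * (M-1).choose ab.2 = M.choose (ab.2+1) * (ab.2+1) := by
    have h := Nat.add_one_mul_choose_eq (M-1) ab.2
    simpa [hM1, Nat.succ_eq_add_one] using h
  have hn' : (M:ℝ) * ((M-1).choose ab.2 : ℝ) = (M.choose (ab.2+1) : ℝ) * ((ab.2:ℝ)+1) := by
    exact_mod_cast congrArg (Nat.cast : ℕ → ℝ) hn
  have h2 : M - (ab.2+1) = M - 1 - ab.2 := by omega
  rw [Nat.succ_eq_add_one, h2]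
  simp only [Nat.add_sub_cancel]
  push_cast
  linear_combination (A.coeff ab.1 * x ^ (M-1-ab.2) * y ^ ab.2) * hn'

lemma sum_prod (m n : ℕ) (p x y : ℝ) :
    ∑ j ∈ Finset.range (n+1),
        Polynomial.C (n.choose j : ℝ) * ((1 + C p * X)^(n-j) * (C x + C y * X)^(m+j))
      = (C x + C y * X)^m * (C (1+x) + C (p+y) * X)^n := by
  have e : C (1+x) + C (p+y) * X = (C x + C y * X) + (1 + C p * X) := by
    rw [C_add, C_add, C_1]; ring
  set A : ℝ[X] := 1 + C p * X with hA
  set B : ℝ[X] := C x + C y * X with hB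
  clear_value A B
  rw [e, add_pow, Finset.mul_sum]
  refine Finset.sum_congr rfl fun j hj => ?_
  rw [pow_add, ← C_eq_natCast]
  ring

lemma coeff_final (m n K : ℕ) (p x y : ℝ) (hx : 0 < x) :
    ((C x + C y * X)^m * (C (1+x) + C (p+y) * X)^n).coeff K
      = x^m * (1+x)^n * esymm (m+n) K
          (fun i => if (i : ℕ) < m then y / x else (p + y) / (1 + x)) := by
  have hx1 : (0:ℝ) < 1 + x := by linarith
  have e1 : C x + C y * X = C x * (1 + C (y/x) * X) := by
    rw [mul_add, mul_one, ← mul_assoc, ← C_mul, mul_div_cancel₀ _ hx.ne']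
  have e2 : C (1+x) + C (p+y) * X = C (1+x) * (1 + C ((p+y)/(1+x)) * X) := by
    rw [mul_add, mul_one, ← mul_assoc, ← C_mul, mul_div_cancel₀ _ hx1.ne']
  rw [e1, e2, mul_pow, mul_pow, ← C_pow, ← C_pow, mul_mul_mul_comm, ← C_mul, coeff_C_mul]
  have hprod : (1 + C (y/x) * X)^m * (1 + C ((p+y)/(1+x)) * X)^n
      = ∏ i : Fin (m+n),
          (1 + C (if (i : ℕ) < m then y / x else (p + y) / (1 + x)) * X) := by
    rw [Fin.prod_univ_add]
    congr 1
    · rw [Finset.prod_congr rfl (fun i _ => by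
        rw [if_pos (by simpa using (Fin.castAdd n i).isLt)]), Finset.prod_const,
        Finset.card_univ, Fintype.card_fin]
    · rw [Finset.prod_congr rfl (fun i _ => by
        rw [if_neg (by simp)]), Finset.prod_const, Finset.card_univ, Fintype.card_fin]
  rw [hprod, coeff_prod_one_add]

/-- ∂G/∂y (x,y) = x^m (1+x)^n σ_{k-1}(λ̌), where λ̌ has m components y/x and
n components (p+y)/(1+x). -/
theorem G_deriv_y (m n k : ℕ) (hk : 1 ≤ k) (p x y : ℝ) (hx : 0 < x) :
    deriv (fun y => G m n k p x y) y
      = x ^ m * (1 + x) ^ n *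
        esymm (m + n) (k - 1)
          (fun i => if (i : ℕ) < m then y / x else (p + y) / (1 + x)) := by
  have hfun : (fun y => G m n k p x y)
      = fun y => ∑ j ∈ Finset.range (n+1), (n.choose j : ℝ)/(m+j+1)
          * ((1 + C p * X)^(n-j) * (C x + C y * X)^(m+j+1)).coeff k := by
    funext y; exact G_closed m n k p x y
  have hd : HasDerivAt
      (fun y => ∑ j ∈ Finset.range (n+1), (n.choose j : ℝ)/(m+j+1)
          * ((1 + C p * X)^(n-j) * (C x + C y * X)^(m+j+1)).coeff k)
      (∑ j ∈ Finset.range (n+1), (n.choose j : ℝ)/(m+j+1)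
          * (((m+j+1 : ℕ) : ℝ)
            * ((1 + C p * X)^(n-j) * (C x + C y * X)^(m+j+1-1)).coeff (k-1))) y :=
    HasDerivAt.fun_sum fun j _ =>
      (hasDerivAt_coeff _ x y (m+j+1) k (by omega) hk).const_mul _
  rw [hfun, hd.deriv]
  have hsimp : ∀ j ∈ Finset.range (n+1),
      (n.choose j : ℝ)/(m+j+1)
        * (((m+j+1 : ℕ) : ℝ)
          * ((1 + C p * X)^(n-j) * (C x + C y * X)^(m+j+1-1)).coeff (k-1))
      = (n.choose j : ℝ)
          * ((1 + C p * X)^(n-j) * (C x + C y * X)^(m+j)).coeff (k-1) := by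
    intro j _
    rw [Nat.add_sub_cancel]
    push_cast
    field_simp
  rw [Finset.sum_congr rfl hsimp]
  have : ∑ j ∈ Finset.range (n+1), (n.choose j : ℝ)
      * ((1 + C p * X)^(n-j) * (C x + C y * X)^(m+j)).coeff (k-1)
      = ((C x + C y * X)^m * (C (1+x) + C (p+y) * X)^n).coeff (k-1) := by
    rw [← sum_prod m n p x y, finset_sum_coeff]
    exact Finset.sum_congr rfl fun j _ => (coeff_C_mul _).symm
  rw [this, coeff_final m n (k-1) p x y hx]
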